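/- Let b, c, d, f ∈ ℂ with Re b > 0 and Re c > 0. Then for all ρ ∈ ℂ with |ρ| < 1, (1−ρ)^{d−c} · ₂F₁(b−f, d; b; ρ) = Σ_{m=0}^∞ (ρ^m/m!) (c)_m · ₃F₂(−m, d, f; b, c; 1), where the ₃F₂ is a terminating hypergeometric sum. -/

import Mathlib

open Complex Finset Filter Topology Metric

/-- The Pochhammer symbol (rising factorial) `(z)_n = z(z+1)⋯(z+n-1)`. -/
noncomputable def poch (z : ℂ) (n : ℕ) : ℂ := ∏ i ∈ Finset.range n, (z + i)

/-- The Gauss hypergeometric series `₂F₁(a, b; c; z)` as a formal sum. -/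
noncomputable def F21 (a b c z : ℂ) : ℂ :=
  ∑' n : ℕ, poch a n * poch b n / (poch c n * n.factorial) * z ^ n

/-- The terminating `₃F₂(-m, d, f; b, c; 1)`. -/
noncomputable def F32term (m : ℕ) (d f b c : ℂ) : ℂ :=
  ∑ l ∈ Finset.range (m + 1),
    poch (-(m : ℂ)) l * poch d l * poch f l / (poch b l * poch c l * l.factorial)

lemma poch_zero (z : ℂ) : poch z 0 = 1 := by simp [poch]
lemma poch_succ (z : ℂ) (n : ℕ) : poch z (n + 1) = poch z n * (z + n) := by
  simp [poch, Finset.prod_range_succ]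
lemma poch_add (z : ℂ) (a b : ℕ) : poch z (a + b) = poch z a * poch (z + a) b := by
  induction b with
  | zero => simp [poch_zero]
  | succ b ih => rw [← Nat.add_assoc, poch_succ, ih, poch_succ, mul_assoc]; push_cast; ring_nf
lemma poch_one_add (z : ℂ) (n : ℕ) : poch z (1 + n) = z * poch (z + 1) n := by
  rw [poch_add]; simp [poch]
lemma poch_ne_zero {z : ℂ} (hz : 0 < z.re) (n : ℕ) : poch z n ≠ 0 := by
  refine Finset.prod_ne_zero_iff.2 fun i _ h => ?_
  have h2 : (z + i).re = 0 := by rw [h]; simp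
  simp only [Complex.add_re, Complex.natCast_re] at h2
  have h3 : (0:ℝ) ≤ (i:ℝ) := by positivity
  linarith
lemma fact_ne_zero (n : ℕ) : ((n.factorial : ℂ)) ≠ 0 := by
  exact_mod_cast Nat.cast_ne_zero.mpr n.factorial_ne_zero

/-- Vandermonde in Pochhammer form. -/
lemma vandermonde (x y : ℂ) : ∀ k : ℕ,
    ∑ j ∈ Finset.range (k + 1), (k.choose j : ℂ) * poch x j * poch y (k - j)
      = poch (x + y) k := by
  intro k
  induction k with
  | zero => simp [poch_zero]
  | succ k ih =>
    rw [Finset.sum_range_succ']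
    have h1 : ∀ j ∈ Finset.range (k + 1),
        ((k+1).choose (j+1) : ℂ) * poch x (j+1) * poch y (k + 1 - (j+1))
        = (k.choose j : ℂ) * poch x (j+1) * poch y (k - j)
          + (k.choose (j+1) : ℂ) * poch x (j+1) * poch y (k - j) := by
      intro j hj
      have e : k + 1 - (j + 1) = k - j := by omega
      rw [e, Nat.choose_succ_succ]
      push_cast [Nat.succ_eq_add_one]
      ring
    rw [Finset.sum_congr rfl h1, Finset.sum_add_distrib]
    have h2 : ∑ j ∈ Finset.range (k + 1), (k.choose (j+1) : ℂ) * poch x (j+1) * poch y (k - j)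
        = ∑ j ∈ Finset.range (k + 1), (k.choose j : ℂ) * poch x j * poch y (k + 1 - j)
          - poch y (k + 1) := by
      rw [Finset.sum_range_succ (fun j => (k.choose (j+1) : ℂ) * poch x (j+1) * poch y (k - j)) k]
      simp only [Nat.choose_succ_self, Nat.cast_zero, zero_mul, add_zero]
      rw [Finset.sum_range_succ' (fun j => (k.choose j : ℂ) * poch x j * poch y (k + 1 - j)) k]
      have : ∀ j ∈ Finset.range k, (k.choose (j+1) : ℂ) * poch x (j+1) * poch y (k + 1 - (j+1))
          = (k.choose (j+1) : ℂ) * poch x (j+1) * poch y (k - j) := by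
        intro j hj
        have e : k + 1 - (j + 1) = k - j := by omega
        rw [e]
      rw [Finset.sum_congr rfl this]
      simp [poch_zero]
    rw [h2]
    have key : ∑ j ∈ Finset.range (k + 1), (k.choose j : ℂ) * poch x (j+1) * poch y (k - j)
        + ∑ j ∈ Finset.range (k + 1), (k.choose j : ℂ) * poch x j * poch y (k + 1 - j)
        = (x + y + k) * poch (x + y) k := by
      rw [← ih, ← Finset.sum_add_distrib, Finset.mul_sum]
      apply Finset.sum_congr rfl
      intro j hj
      rw [Finset.mem_range] at hj
      have hj' : j ≤ k := by omega
      have e2 : k + 1 - j = (k - j) + 1 := by omega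
      rw [poch_succ x j, e2, poch_succ]
      have e3 : ((k - j : ℕ) : ℂ) = (k : ℂ) - j := by
        push_cast [Nat.cast_sub hj']; ring
      rw [e3]; ring
    rw [poch_succ (x + y) k]
    simp only [Nat.choose_zero_right, Nat.cast_one, poch_zero, one_mul, Nat.sub_zero]
    linear_combination key

/-- Chu–Vandermonde, polynomial form. -/
lemma chu : ∀ m : ℕ, ∀ b f : ℂ,
    ∑ l ∈ Finset.range (m + 1), (-1 : ℂ) ^ l * (m.choose l : ℂ) * poch f l * poch (b + l) (m - l)
      = poch (b - f) m := by
  intro m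
  induction m with
  | zero => intro b f; simp [poch_zero]
  | succ m ih =>
    intro b f
    rw [Finset.sum_range_succ']
    have h1 : ∀ l ∈ Finset.range (m + 1),
        (-1 : ℂ) ^ (l+1) * ((m+1).choose (l+1) : ℂ) * poch f (l+1) * poch (b + (l+1 : ℕ)) (m + 1 - (l+1))
        = -((-1 : ℂ) ^ l * (m.choose l : ℂ) * poch f (l+1) * poch (b + (l+1:ℕ)) (m - l))
          + -((-1 : ℂ) ^ l * (m.choose (l+1) : ℂ) * poch f (l+1) * poch (b + (l+1:ℕ)) (m - l)) := by
      intro l hl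
      have e : m + 1 - (l + 1) = m - l := by omega
      rw [e, Nat.choose_succ_succ]
      push_cast [Nat.succ_eq_add_one]
      ring
    rw [Finset.sum_congr rfl h1, Finset.sum_add_distrib]
    -- sum A = -f * poch (b - f) m
    have hA : ∑ l ∈ Finset.range (m + 1),
        -((-1 : ℂ) ^ l * (m.choose l : ℂ) * poch f (l+1) * poch (b + (l+1:ℕ)) (m - l))
        = -f * poch (b - f) m := by
      have : ∀ l ∈ Finset.range (m + 1),
          -((-1 : ℂ) ^ l * (m.choose l : ℂ) * poch f (l+1) * poch (b + (l+1:ℕ)) (m - l))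
          = -f * ((-1 : ℂ) ^ l * (m.choose l : ℂ) * poch (f+1) l * poch ((b+1) + l) (m - l)) := by
        intro l hl
        have e1 : poch f (l+1) = f * poch (f+1) l := by
          rw [Nat.add_comm l 1, poch_one_add]
        have e2 : (b + ((l:ℕ)+1:ℕ) : ℂ) = (b+1) + (l:ℕ) := by push_cast; ring
        rw [e1, e2]
        ring
      rw [Finset.sum_congr rfl this, ← Finset.mul_sum, ih (b+1) (f+1)]
      ring_nf
    -- sum B
    have hB : ∑ l ∈ Finset.range (m + 1),
        -((-1 : ℂ) ^ l * (m.choose (l+1) : ℂ) * poch f (l+1) * poch (b + (l+1:ℕ)) (m - l))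
        = (b + m) * poch (b - f) m - poch b (m+1) := by
      have peel := Finset.sum_range_succ'
        (fun l => (-1 : ℂ) ^ l * (m.choose l : ℂ) * poch f l * poch (b + l) (m + 1 - l)) (m+1)
      -- LHS of peel over range (m+2); its top term l = m+1 vanishes
      have htop : ∑ l ∈ Finset.range (m + 1 + 1),
          (-1 : ℂ) ^ l * (m.choose l : ℂ) * poch f l * poch (b + l) (m + 1 - l)
          = ∑ l ∈ Finset.range (m + 1),
            (-1 : ℂ) ^ l * (m.choose l : ℂ) * poch f l * poch (b + l) (m + 1 - l) := by
        rw [Finset.sum_range_succ]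
        simp [Nat.choose_succ_self]
      have hmain : ∑ l ∈ Finset.range (m + 1),
          (-1 : ℂ) ^ l * (m.choose l : ℂ) * poch f l * poch (b + l) (m + 1 - l)
          = (b + m) * poch (b - f) m := by
        rw [← ih b f, Finset.mul_sum]
        apply Finset.sum_congr rfl
        intro l hl
        rw [Finset.mem_range] at hl
        have hl' : l ≤ m := by omega
        have e : m + 1 - l = (m - l) + 1 := by omega
        rw [e, poch_succ]
        have e2 : (b + l + ((m - l : ℕ) : ℂ)) = b + m := by
          push_cast [Nat.cast_sub hl']; ring
        rw [e2]; ring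
      have hshift : ∀ l ∈ Finset.range (m+1),
          (-1:ℂ)^(l+1) * (m.choose (l+1) : ℂ) * poch f (l+1) * poch (b + ((l:ℕ)+1:ℕ)) (m + 1 - (l+1))
          = -((-1 : ℂ) ^ l * (m.choose (l+1) : ℂ) * poch f (l+1) * poch (b + (l+1:ℕ)) (m - l)) := by
        intro l hl
        have e : m + 1 - (l + 1) = m - l := by omega
        rw [e]; push_cast; ring
      rw [htop, hmain] at peel
      rw [← Finset.sum_congr rfl hshift]
      have h0 : (-1:ℂ)^0 * ((m.choose 0 : ℕ) : ℂ) * poch f 0 * poch (b + (0:ℕ)) (m + 1 - 0) = poch b (m+1) := by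
        simp [poch_zero]
      rw [h0] at peel
      linear_combination -peel
    rw [hA, hB]
    have h0' : (-1:ℂ)^0 * (((m+1).choose 0 : ℕ) : ℂ) * poch f 0 * poch (b + (0:ℕ)) (m + 1 - 0) = poch b (m+1) := by
      simp [poch_zero]
    rw [h0', poch_succ (b - f) m]
    ring

lemma tri_swap (g : ℕ → ℕ → ℂ) : ∀ n : ℕ,
    ∑ l ∈ Finset.range n, ∑ i ∈ Finset.range (l + 1), g i (l - i)
      = ∑ i ∈ Finset.range n, ∑ j ∈ Finset.range (n - i), g i j := by
  intro n
  induction n with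
  | zero => simp
  | succ n ih =>
    rw [Finset.sum_range_succ, ih]
    have h1 : ∀ i ∈ Finset.range (n+1),
        ∑ j ∈ Finset.range (n + 1 - i), g i j
        = ∑ j ∈ Finset.range (n - i), g i j + g i (n - i) := by
      intro i hi
      rw [Finset.mem_range] at hi
      have e : n + 1 - i = (n - i) + 1 := by omega
      rw [e, Finset.sum_range_succ]
    rw [Finset.sum_congr rfl h1, Finset.sum_add_distrib]
    congr 1
    rw [Finset.sum_range_succ]
    simp

/-- `(-m)_i * (m-i)! = (-1)^i m!` for `i ≤ m`. -/
lemma poch_neg_nat (m : ℕ) : ∀ i : ℕ, i ≤ m →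
    poch (-(m : ℂ)) i * ((m - i).factorial : ℂ) = (-1) ^ i * (m.factorial : ℂ) := by
  intro i
  induction i with
  | zero => intro _; simp [poch_zero]
  | succ i ih =>
    intro him
    have hi : i ≤ m := by omega
    have hmi : ((m - i : ℕ) : ℂ) ≠ 0 := Nat.cast_ne_zero.mpr (by omega)
    apply mul_right_cancel₀ hmi
    have e1 : m - i = (m - (i+1)) + 1 := by omega
    have e2 : ((m - i : ℕ) : ℂ) = (m : ℂ) - i := by push_cast [Nat.cast_sub hi]; ring
    have e4 : (m - i).factorial = (m - i) * (m - (i+1)).factorial := by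
      rw [e1, Nat.factorial_succ]
    calc poch (-(m:ℂ)) (i+1) * ((m - (i+1)).factorial : ℂ) * ((m - i : ℕ) : ℂ)
        = (poch (-(m:ℂ)) i * ((m - i).factorial : ℂ)) * (-(m:ℂ) + i) := by
          rw [poch_succ, e4]; push_cast; ring
      _ = ((-1) ^ i * (m.factorial : ℂ)) * (-(m:ℂ) + i) := by rw [ih hi]
      _ = (-1) ^ (i+1) * (m.factorial : ℂ) * ((m - i : ℕ) : ℂ) := by rw [e2]; ring


lemma vandermonde_div (x y : ℂ) (k : ℕ) :
    ∑ j ∈ Finset.range (k + 1), poch x j / (j.factorial : ℂ) * (poch y (k - j) / ((k - j).factorial : ℂ))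
      = poch (x + y) k / (k.factorial : ℂ) := by
  rw [eq_div_iff (fact_ne_zero k), ← vandermonde x y k, Finset.sum_mul]
  apply Finset.sum_congr rfl
  intro j hj
  rw [Finset.mem_range] at hj
  have hj' : j ≤ k := by omega
  have hch : (k.choose j : ℂ) * (j.factorial : ℂ) * ((k - j).factorial : ℂ) = (k.factorial : ℂ) := by
    exact_mod_cast congrArg (Nat.cast : ℕ → ℂ) (Nat.choose_mul_factorial_mul_factorial hj')
  rw [div_mul_div_comm, div_mul_eq_mul_div,
    div_eq_iff (mul_ne_zero (fact_ne_zero j) (fact_ne_zero (k - j)))]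
  linear_combination -(poch x j * poch y (k - j)) * hch

/-- The key coefficient identity. -/
lemma coeff_eq (b c d f : ℂ) (hb : 0 < b.re) (hc : 0 < c.re) (m : ℕ) :
    ∑ l ∈ Finset.range (m + 1),
        poch (c - d) (m - l) / ((m - l).factorial : ℂ)
          * (poch (b - f) l * poch d l / (poch b l * (l.factorial : ℂ)))
      = poch c m / (m.factorial : ℂ) * F32term m d f b c := by
  set g : ℕ → ℕ → ℂ := fun i j =>
    (-1) ^ i * poch f i * poch d i / (poch b i * (i.factorial : ℂ))
      * (poch (d + i) j / (j.factorial : ℂ))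
      * (poch (c - d) (m - i - j) / ((m - i - j).factorial : ℂ)) with hg
  have hRHS : poch c m / (m.factorial : ℂ) * F32term m d f b c
      = ∑ i ∈ Finset.range (m + 1), ∑ j ∈ Finset.range (m + 1 - i), g i j := by
    rw [F32term, Finset.mul_sum]
    apply Finset.sum_congr rfl
    intro i hi
    rw [Finset.mem_range] at hi
    have hi' : i ≤ m := by omega
    have e : m + 1 - i = (m - i) + 1 := by omega
    have hv : ∑ j ∈ Finset.range (m + 1 - i), g i j
        = (-1) ^ i * poch f i * poch d i / (poch b i * (i.factorial : ℂ))
            * (poch (c + i) (m - i) / ((m - i).factorial : ℂ)) := by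
      rw [e]
      have hsplit : ∀ j ∈ Finset.range ((m - i) + 1), g i j
          = ((-1) ^ i * poch f i * poch d i / (poch b i * (i.factorial : ℂ)))
            * ((poch (d + i) j / (j.factorial : ℂ))
                * (poch (c - d) ((m - i) - j) / (((m - i) - j).factorial : ℂ))) := by
        intro j _
        rw [hg]
        have : m - i - j = (m - i) - j := by omega
        rw [this]; ring
      rw [Finset.sum_congr rfl hsplit, ← Finset.mul_sum]
      have inner := vandermonde_div (d + i) (c - d) (m - i)
      rw [show (d + (i:ℕ)) + (c - d) = c + (i:ℕ) by ring] at inner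
      rw [inner]
    rw [hv]
    have hpochc : poch c m = poch c i * poch (c + i) (m - i) := by
      rw [← poch_add]; congr 1; omega
    have hmi := fact_ne_zero (m - i)
    have hneg := poch_neg_nat m i hi'
    rw [hpochc]
    have hbne := poch_ne_zero hb i
    have hcne := poch_ne_zero hc i
    have hm := fact_ne_zero m
    have hii := fact_ne_zero i
    rw [div_mul_div_comm, div_mul_div_comm]
    rw [div_eq_div_iff
      (by exact mul_ne_zero hm (mul_ne_zero (mul_ne_zero hbne hcne) hii))
      (by exact mul_ne_zero (mul_ne_zero hbne hii) hmi)]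
    linear_combination (poch c i * poch (c + (i:ℕ)) (m - i) * poch d i * poch f i
      * poch b i * (i.factorial : ℂ)) * hneg
  rw [hRHS, ← tri_swap g (m + 1)]
  apply Finset.sum_congr rfl
  intro l hl
  rw [Finset.mem_range] at hl
  have hl' : l ≤ m := by omega
  rw [← chu l b f, Finset.sum_mul, Finset.sum_div, Finset.mul_sum]
  apply Finset.sum_congr rfl
  intro i hi
  rw [Finset.mem_range] at hi
  have hi' : i ≤ l := by omega
  simp only [hg]
  have e1 : m - i - (l - i) = m - l := by omega
  have e2 : poch d l = poch d i * poch (d + i) (l - i) := by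
    rw [← poch_add]; congr 1; omega
  have e3 : poch b l = poch b i * poch (b + i) (l - i) := by
    rw [← poch_add]; congr 1; omega
  have hfl : (l.factorial : ℂ) = (l.choose i : ℂ) * (i.factorial : ℂ) * ((l - i).factorial : ℂ) := by
    exact_mod_cast (congrArg (Nat.cast : ℕ → ℂ)
      (Nat.choose_mul_factorial_mul_factorial hi')).symm
  have hbine := poch_ne_zero hb i
  have hbline : poch (b + i) (l - i) ≠ 0 := by
    apply poch_ne_zero
    simp only [Complex.add_re, Complex.natCast_re]
    have : (0:ℝ) ≤ (i:ℝ) := by positivity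
    linarith
  have hfi := fact_ne_zero i
  have hfli := fact_ne_zero (l - i)
  have hfml := fact_ne_zero (m - l)
  have hchne : ((l.choose i : ℕ) : ℂ) ≠ 0 :=
    Nat.cast_ne_zero.mpr (Nat.choose_pos hi').ne'
  rw [e1, e2, e3, hfl]
  rw [div_mul_div_comm, div_mul_div_comm, div_mul_div_comm]
  rw [div_eq_div_iff (by exact mul_ne_zero hfml (mul_ne_zero (mul_ne_zero hbine hbline)
      (mul_ne_zero (mul_ne_zero hchne hfi) hfli)))
    (by exact mul_ne_zero (mul_ne_zero (mul_ne_zero hbine hfi) hfli) hfml)]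
  ring

lemma tendsto_inv_nat_add (y : ℂ) :
    Tendsto (fun n : ℕ => ((y + n : ℂ))⁻¹) atTop (𝓝 0) := by
  rw [tendsto_zero_iff_norm_tendsto_zero]
  simp only [norm_inv]
  apply Tendsto.inv_tendsto_atTop
  have hbound : (fun n : ℕ => (n : ℝ) - ‖y‖) ≤ᶠ[atTop] fun n : ℕ => ‖y + n‖ := by
    filter_upwards [eventually_ge_atTop 0] with n _
    calc (n : ℝ) - ‖y‖ = ‖((n:ℂ))‖ - ‖-y‖ := by simp
      _ ≤ ‖(n:ℂ) - (-y)‖ := norm_sub_norm_le _ _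
      _ = ‖y + n‖ := by rw [sub_neg_eq_add, add_comm]
  have hat : Tendsto (fun n : ℕ => (n : ℝ) - ‖y‖) atTop atTop :=
    (tendsto_atTop_add_const_right atTop (-‖y‖) tendsto_natCast_atTop_atTop).congr
      (fun n => by ring)
  exact tendsto_atTop_mono' atTop hbound hat

lemma tendsto_ratio (x y : ℂ) :
    Tendsto (fun n : ℕ => (x + n) / (y + n)) atTop (𝓝 1) := by
  have h0 : Tendsto (fun n : ℕ => 1 + (x - y) * (y + n)⁻¹) atTop (𝓝 1) := by
    have := (tendsto_inv_nat_add y).const_mul (x - y)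
    simpa using tendsto_const_nhds.add this
  apply h0.congr'
  have hev : ∀ᶠ n : ℕ in atTop, ‖y‖ < (n : ℝ) :=
    tendsto_natCast_atTop_atTop.eventually_gt_atTop ‖y‖
  filter_upwards [hev] with n hn
  have hyn : (y + (n:ℂ)) ≠ 0 := by
    intro h
    have : y = -(n:ℂ) := by linear_combination h
    rw [this] at hn
    simp at hn
  field_simp
  ring

lemma summable_norm_of_ratio {u g : ℕ → ℂ} {L : ℝ}
    (h : ∀ n, u (n + 1) = u n * g n)
    (hg : Tendsto (fun n => ‖g n‖) atTop (𝓝 L)) (hL : L < 1) :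
    Summable (fun n => ‖u n‖) := by
  obtain ⟨r, hLr, hr1⟩ := exists_between hL
  apply summable_of_ratio_norm_eventually_le (f := fun n => ‖u n‖) hr1
  filter_upwards [hg.eventually_le_const hLr] with n hn
  rw [Real.norm_of_nonneg (norm_nonneg _), Real.norm_of_nonneg (norm_nonneg _), h n, norm_mul]
  calc ‖u n‖ * ‖g n‖ ≤ ‖u n‖ * r := mul_le_mul_of_nonneg_left hn (norm_nonneg _)
    _ = r * ‖u n‖ := mul_comm _ _

/-- iterated derivative of `(1-z)^w` on the unit ball -/
lemma iter_deriv_one_sub_cpow (w : ℂ) : ∀ n : ℕ, ∀ z ∈ Metric.ball (0:ℂ) 1,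
    iteratedDeriv n (fun z : ℂ => (1 - z) ^ w) z = poch (-w) n * (1 - z) ^ (w - n) := by
  intro n
  induction n with
  | zero =>
    intro z _
    simp [poch_zero]
  | succ n ih =>
    intro z hz
    rw [iteratedDeriv_succ]
    have heq : deriv (iteratedDeriv n (fun z : ℂ => (1 - z) ^ w)) z
        = deriv (fun z : ℂ => poch (-w) n * (1 - z) ^ (w - n)) z := by
      apply Filter.EventuallyEq.deriv_eq
      exact Filter.eventuallyEq_of_mem (Metric.isOpen_ball.mem_nhds hz) ih
    rw [heq]
    have hre : 0 < (1 - z).re := by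
      rw [Metric.mem_ball, dist_zero_right] at hz
      have := abs_re_le_norm z
      simp only [Complex.sub_re, Complex.one_re]
      have : z.re ≤ ‖z‖ := (abs_le.mp (abs_re_le_norm z)).2
      linarith
    have h1 : HasDerivAt (fun z : ℂ => 1 - z) (-1) z := (hasDerivAt_id z).const_sub 1
    have h2 : HasDerivAt (fun z : ℂ => (1 - z) ^ (w - n))
        ((w - n) * (1 - z) ^ (w - n - 1) * (-1)) z := h1.cpow_const (Or.inl hre)
    have h3 := (h2.const_mul (poch (-w) n)).deriv
    rw [h3, poch_succ]
    push_cast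
    rw [show w - ((n:ℂ) + 1) = w - n - 1 by ring]
    ring

/-- Binomial series. -/
lemma hasSum_binomial (w : ℂ) {ρ : ℂ} (hρ : ‖ρ‖ < 1) :
    HasSum (fun k : ℕ => poch (-w) k / (k.factorial : ℂ) * ρ ^ k) ((1 - ρ) ^ w) := by
  have hdiff : DifferentiableOn ℂ (fun z : ℂ => (1 - z) ^ w) (Metric.ball 0 1) := by
    intro z hz
    have hre : 0 < (1 - z).re := by
      rw [Metric.mem_ball, dist_zero_right] at hz
      have : z.re ≤ ‖z‖ := (abs_le.mp (abs_re_le_norm z)).2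
      simp only [Complex.sub_re, Complex.one_re]
      linarith
    have h1 : HasDerivAt (fun z : ℂ => 1 - z) (-1) z := (hasDerivAt_id z).const_sub 1
    exact (h1.cpow_const (Or.inl hre)).differentiableAt.differentiableWithinAt
  have hmem : ρ ∈ Metric.ball (0:ℂ) 1 := by
    rw [Metric.mem_ball, dist_zero_right]; exact hρ
  have H := Complex.hasSum_taylorSeries_on_ball hdiff hmem
  simp only [smul_eq_mul, sub_zero] at H
  convert H using 2 with k
  · rfl
  rw [iter_deriv_one_sub_cpow w k 0 (by simp), sub_zero, one_cpow]
  ring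


theorem cdh_lemma6 (b c d f : ℂ) (hb : 0 < b.re) (hc : 0 < c.re)
    (ρ : ℂ) (hρ : ‖ρ‖ < 1) :
    (1 - ρ) ^ (d - c) * F21 (b - f) d b ρ =
      ∑' m : ℕ, ρ ^ m / m.factorial * poch c m * F32term m d f b c := by
  have hBinSum : HasSum (fun k : ℕ => poch (c - d) k / (k.factorial : ℂ) * ρ ^ k)
      ((1 - ρ) ^ (d - c)) := by
    have := hasSum_binomial (d - c) hρ
    rwa [show -(d - c) = c - d by ring] at this
  -- the two coefficient sequences
  set t : ℕ → ℂ := fun k => poch (c - d) k / (k.factorial : ℂ) * ρ ^ k with hT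
  set s : ℕ → ℂ := fun n =>
    poch (b - f) n * poch d n / (poch b n * (n.factorial : ℂ)) * ρ ^ n with hS
  -- recurrences
  have ht_rec : ∀ k : ℕ, t (k + 1) = t k * ((c - d + k) / (1 + (k:ℂ)) * ρ) := by
    intro k
    have h1k : ((1:ℂ) + k) ≠ 0 := by
      have := Nat.cast_add_one_ne_zero (R := ℂ) k
      rwa [add_comm] at this
    simp only [hT, poch_succ, Nat.factorial_succ]
    push_cast
    field_simp
    ring
  have hs_rec : ∀ n : ℕ, s (n + 1)
      = s n * ((b - f + n) * (d + n) / ((b + n) * (1 + (n:ℂ))) * ρ) := by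
    intro n
    have h1n : ((1:ℂ) + n) ≠ 0 := by
      have := Nat.cast_add_one_ne_zero (R := ℂ) n
      rwa [add_comm] at this
    have hbn : (b + (n:ℂ)) ≠ 0 := by
      intro h
      have h2 : (b + (n:ℂ)).re = 0 := by rw [h]; simp
      simp only [Complex.add_re, Complex.natCast_re] at h2
      have : (0:ℝ) ≤ (n:ℝ) := by positivity
      linarith
    have hpb := poch_ne_zero hb n
    simp only [hS, poch_succ, Nat.factorial_succ]
    push_cast
    field_simp
    ring
  -- summability of norms
  have ht_sum : Summable (fun k => ‖t k‖) := by
    apply summable_norm_of_ratio ht_rec ?_ hρ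
    have h1 : Tendsto (fun k : ℕ => (c - d + k) / (1 + (k:ℂ)) * ρ) atTop (𝓝 ρ) := by
      have := (tendsto_ratio (c - d) 1).mul_const ρ
      simpa using this
    exact h1.norm
  have hs_sum : Summable (fun n => ‖s n‖) := by
    apply summable_norm_of_ratio hs_rec ?_ hρ
    have h1 : Tendsto
        (fun n : ℕ => (b - f + n) * (d + n) / ((b + n) * (1 + (n:ℂ))) * ρ) atTop (𝓝 ρ) := by
      have h2 := ((tendsto_ratio (b - f) b).mul (tendsto_ratio d 1)).mul_const ρ
      simp only [one_mul, mul_one] at h2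
      apply h2.congr
      intro n
      rw [mul_div_mul_comm]
    exact h1.norm
  -- Cauchy product
  rw [hBinSum.tsum_eq.symm, F21,
    tsum_mul_tsum_eq_tsum_sum_range_of_summable_norm ht_sum hs_sum]
  apply tsum_congr
  intro m
  have h1 : ∀ k ∈ Finset.range (m + 1),
      t k * s (m - k)
      = ρ ^ m * (poch (c - d) k / (k.factorial : ℂ)
          * (poch (b - f) (m - k) * poch d (m - k)
              / (poch b (m - k) * ((m - k).factorial : ℂ)))) := by
    intro k hk
    rw [Finset.mem_range] at hk
    have hk' : k ≤ m := by omega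
    simp only [hT, hS]
    rw [show ρ ^ m = ρ ^ k * ρ ^ (m - k) by rw [← pow_add]; congr 1; omega]
    ring
  rw [Finset.sum_congr rfl h1, ← Finset.mul_sum]
  have h2 : ∑ k ∈ Finset.range (m + 1),
      poch (c - d) k / (k.factorial : ℂ)
        * (poch (b - f) (m - k) * poch d (m - k)
            / (poch b (m - k) * ((m - k).factorial : ℂ)))
      = ∑ l ∈ Finset.range (m + 1),
        poch (c - d) (m - l) / ((m - l).factorial : ℂ)
          * (poch (b - f) l * poch d l / (poch b l * (l.factorial : ℂ))) := by
    rw [← Finset.sum_range_reflect (fun l => poch (c - d) (m - l) / ((m - l).factorial : ℂ)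
      * (poch (b - f) l * poch d l / (poch b l * (l.factorial : ℂ)))) (m + 1)]
    apply Finset.sum_congr rfl
    intro j hj
    rw [Finset.mem_range] at hj
    have e1 : m + 1 - 1 - j = m - j := by omega
    have e2 : m - (m - j) = j := by omega
    rw [e1, e2]
  rw [h2, coeff_eq b c d f hb hc m]
  ring
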